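/- For every integer n ≥ 4 and every integer k with 2 ≤ k ≤ ⌊n/2⌋, we have n · sin(πk/n)/sin(π/n) > k(n−k) + 1. -/

import Mathlib

open Real

lemma aux_sum_id (k : ℕ) : ∑ j ∈ Finset.range k, (j : ℝ) = ((k:ℝ)^2 - k)/2 := by
  induction k with
  | zero => simp
  | succ m ih => rw [Finset.sum_range_succ, ih]; push_cast; ring

lemma aux_sum_sq (k : ℕ) : ∑ j ∈ Finset.range k, (j : ℝ)^2 = (2*(k:ℝ)^3 - 3*(k:ℝ)^2 + k)/6 := by
  induction k with
  | zero => simp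
  | succ m ih => rw [Finset.sum_range_succ, ih]; push_cast; ring

lemma aux_sum_odd_sq (k : ℕ) :
    ∑ j ∈ Finset.range k, (2*(j:ℝ) + 1 - k)^2 = ((k:ℝ)^3 - k)/3 := by
  have h1 := aux_sum_id k
  have h2 := aux_sum_sq k
  calc ∑ j ∈ Finset.range k, (2*(j:ℝ) + 1 - k)^2
      = ∑ j ∈ Finset.range k, (4*(j:ℝ)^2 + (4*(1-(k:ℝ)))*j + (1-(k:ℝ))^2) := by
        refine Finset.sum_congr rfl fun j _ => by ring
    _ = 4 * ∑ j ∈ Finset.range k, (j:ℝ)^2 + (4*(1-(k:ℝ))) * ∑ j ∈ Finset.range k, (j:ℝ)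
        + (k:ℝ) * (1-(k:ℝ))^2 := by
        rw [Finset.sum_add_distrib, Finset.sum_add_distrib, ← Finset.mul_sum, ← Finset.mul_sum,
          Finset.sum_const, Finset.card_range, nsmul_eq_mul]
    _ = ((k:ℝ)^3 - k)/3 := by rw [h1, h2]; ring

lemma aux_telescope (k : ℕ) (x : ℝ) :
    2 * Real.sin (k * x) = ∑ j ∈ Finset.range k, 2 * Real.sin x * Real.cos ((2*(j:ℝ) + 1 - k) * x) := by
  have := Finset.sum_range_sub (fun j => Real.sin ((2*(j:ℝ) - k) * x)) k
  rw [show ((2*((k:ℝ)) - k) * x) = k * x by ring] at this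
  rw [show ((2*((0:ℕ):ℝ) - k) * x) = -(k * x) by push_cast; ring] at this
  rw [Real.sin_neg, sub_neg_eq_add] at this
  rw [show Real.sin (k*x) + Real.sin (k*x) = 2 * Real.sin (k*x) by ring] at this
  rw [← this]
  refine Finset.sum_congr rfl fun j _ => ?_
  rw [Real.sin_sub_sin]
  push_cast
  ring_nf

theorem stmt_4 (n k : ℕ) (hn : 4 ≤ n) (hk2 : 2 ≤ k) (hk : k ≤ n / 2) :
    (n : ℝ) * Real.sin (π * k / n) / Real.sin (π / n) > k * (n - k) + 1 := by
  have h2k : 2 * k ≤ n := by omega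
  have hn0 : (0:ℝ) < n := by positivity
  have hn1 : (1:ℝ) < n := by exact_mod_cast Nat.lt_of_lt_of_le (by norm_num) hn
  have hk0 : (0:ℝ) < k := by exact_mod_cast Nat.lt_of_lt_of_le (by norm_num) hk2
  set x : ℝ := π / n with hxdef
  have hx0 : 0 < x := by positivity
  have hxpi : x < π := div_lt_self Real.pi_pos hn1
  have hsin0 : 0 < Real.sin x := Real.sin_pos_of_pos_of_lt_pi hx0 hxpi
  have harg : π * k / n = k * x := by rw [hxdef]; ring
  rw [harg, gt_iff_lt, lt_div_iff₀ hsin0]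
  -- lower bound on sin (k x)
  have hcosb : ∀ j ∈ Finset.range k,
      2 * Real.sin x * (1 - ((2*(j:ℝ) + 1 - k) * x)^2 / 2)
        ≤ 2 * Real.sin x * Real.cos ((2*(j:ℝ) + 1 - k) * x) := by
    intro j _
    have := Real.one_sub_sq_div_two_le_cos (x := (2*(j:ℝ) + 1 - k) * x)
    nlinarith [hsin0]
  have hsum_le := Finset.sum_le_sum hcosb
  rw [← aux_telescope k x] at hsum_le
  have hinner : ∑ j ∈ Finset.range k, (1 - ((2*(j:ℝ) + 1 - k) * x)^2 / 2)
      = (k:ℝ) - x^2 * (((k:ℝ)^3 - k)/3) / 2 := by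
    rw [Finset.sum_sub_distrib, Finset.sum_const, Finset.card_range]
    have : ∑ j ∈ Finset.range k, ((2*(j:ℝ) + 1 - k) * x)^2 / 2
        = (x^2/2) * ∑ j ∈ Finset.range k, (2*(j:ℝ) + 1 - k)^2 := by
      rw [Finset.mul_sum]; exact Finset.sum_congr rfl fun j _ => by ring
    rw [this, aux_sum_odd_sq, nsmul_eq_mul]; ring
  rw [← Finset.mul_sum, hinner] at hsum_le
  -- arithmetic
  have hpi2 : π^2 < 10 := by nlinarith [Real.pi_lt_d2, Real.pi_pos]
  have hnk : (2:ℝ) * k ≤ n := by exact_mod_cast h2k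
  have hk2' : (2:ℝ) ≤ k := by exact_mod_cast hk2
  have hq : π^2 * k / (6*(n:ℝ)) < 1 := by
    rw [div_lt_one (by positivity)]
    nlinarith
  have hrw : (π^2/(n:ℝ)) * (((k:ℝ)^3 - k)/6) = ((k:ℝ)^2 - 1) * (π^2 * k / (6*(n:ℝ))) := by
    field_simp
  have hkey : ((k:ℝ) * ((n:ℝ) - k) + 1) < (n:ℝ)*k - (π^2/(n:ℝ)) * (((k:ℝ)^3 - k)/6) := by
    rw [hrw]
    have h1 : (0:ℝ) < (k:ℝ)^2 - 1 := by nlinarith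
    nlinarith [mul_pos h1 (show (0:ℝ) < 1 - π^2 * k / (6*(n:ℝ)) by linarith)]
  have hx2 : (n:ℝ) * x^2 = π^2 / n := by rw [hxdef]; field_simp
  set C : ℝ := (k:ℝ) - x^2 * (((k:ℝ)^3 - k)/3) / 2 with hC
  have e : (n:ℝ) * (Real.sin x * C) = ((n:ℝ)*k - ((n:ℝ)*x^2) * (((k:ℝ)^3 - k)/6)) * Real.sin x := by
    rw [hC]; ring
  rw [hx2] at e
  have hmain : ((k:ℝ) * ((n:ℝ) - k) + 1) * Real.sin x < (n:ℝ) * (Real.sin x * C) := by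
    rw [e]
    exact (mul_lt_mul_iff_of_pos_right hsin0).mpr hkey
  have h5 : Real.sin x * C ≤ Real.sin (k * x) := by
    have e2 : 2 * (Real.sin x * C) = 2 * Real.sin x * C := by ring
    linarith [e2 ▸ hsum_le]
  calc ((k:ℝ) * ((n:ℝ) - k) + 1) * Real.sin x
      < (n:ℝ) * (Real.sin x * C) := hmain
    _ ≤ (n:ℝ) * Real.sin (k * x) := mul_le_mul_of_nonneg_left h5 hn0.le
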